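/- Let h be the Hessenberg function of a skew shape μ/ν with no empty rows, fix k ≥ 0, and let θ = (N-k, 1,...,1) be the hook partition of N = |μ/ν| with k ones. For every w ∈ S_n, the Kostka number K_{θ, μ+δ-w(ν+δ)} equals the number of size-k subsets J ⊆ [n-1] such that w(i) ≤ h^J(i) for all i ∈ [n], where h^J(i) = h(i)-1 if i ∈ J and μ_{h(i)} - ν_i + i - h(i) = 0, and h^J(i) = h(i) otherwise. -/

import Mathlib

open Equiv

/-- `T i j` is the entry of a filling in row `i`, column `j` (0-based);
entries outside the diagram of `shape` are `0`.  Rows weakly increase,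
columns strictly increase. -/
def IsSSYT (shape : ℕ → ℕ) (T : ℕ → ℕ → ℕ) : Prop :=
  (∀ i j, j + 1 < shape i → T i j ≤ T i (j + 1)) ∧
  (∀ i j, j < shape (i + 1) → T i j < T (i + 1) j) ∧
  (∀ i j, shape i ≤ j → T i j = 0)

/-- The Kostka number: the number of semistandard Young tableaux of the given
shape in which the entry `m` appears exactly `c m` times. -/
noncomputable def kostka (shape : ℕ → ℕ) (c : ℕ → ℕ) : ℕ :=
  Set.ncard {T : ℕ → ℕ → ℕ | IsSSYT shape T ∧
    ∀ m : ℕ, {p : ℕ × ℕ | p.2 < shape p.1 ∧ T p.1 p.2 = m}.ncard = c m}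

open Classical in
/-- Kostka number for an integer content, with the convention that it is `0`
whenever the content has a negative entry. -/
noncomputable def kostkaZ (shape : ℕ → ℕ) (c : ℕ → ℤ) : ℕ :=
  if ∀ m, 0 ≤ c m then kostka shape (fun m => (c m).toNat) else 0

/-- The hook shape `(N - k, 1, ..., 1)` with `k` trailing rows of length 1. -/
def hookShape (N k : ℕ) : ℕ → ℕ :=
  fun i => if i = 0 then N - k else if i ≤ k then 1 else 0

/-- Extend a sequence indexed by `Fin n` to all of `ℕ` by zeros. -/
def extendSeq {n : ℕ} (a : Fin n → ℤ) : ℕ → ℤ :=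
  fun m => if h : m < n then a ⟨m, h⟩ else 0

/-- The staircase `δ = (n-1, n-2, ..., 1, 0)`. -/
def deltaSeq (n : ℕ) : Fin n → ℤ := fun i => (n : ℤ) - 1 - (i.val : ℤ)

/-- The sequence `μ + δ - w(ν + δ)`, where a permutation acts on sequences by
shuffling: `(w(a))_i = a_{w⁻¹(i)}`. -/
def hatSeq {n : ℕ} (μ ν : Fin n → ℕ) (w : Perm (Fin n)) : Fin n → ℤ :=
  fun i => ((μ i : ℤ) + deltaSeq n i) - ((ν (w⁻¹ i) : ℤ) + deltaSeq n (w⁻¹ i))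

/-- `h` is the Hessenberg function of the skew shape `μ/ν`:
`h j = max { i | μ i - ν j + j - i ≥ 0 }`. -/
def IsHessOf {n : ℕ} (μ ν : Fin n → ℕ) (h : Fin n → Fin n) : Prop :=
  ∀ j : Fin n, (ν j + ((h j : ℕ)) ≤ μ (h j) + (j : ℕ)) ∧
    ∀ i : Fin n, ν j + (i : ℕ) ≤ μ i + (j : ℕ) → i ≤ h j

/-- The indicator `ĥ(w)` of the condition `w(i) ≤ h(i)` for all `i`. -/
def hhat {n : ℕ} (h : Fin n → Fin n) (w : Perm (Fin n)) : ℕ :=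
  if ∀ i, w i ≤ h i then 1 else 0

/-- The modified Hessenberg function `h^J`: `h^J(i) = h(i) - 1` when `i ∈ J` and
`μ_{h(i)} - ν_i + i - h(i) = 0`, and `h^J(i) = h(i)` otherwise. -/
def hJfun {n : ℕ} (μ ν : Fin n → ℕ) (h : Fin n → Fin n) (J : Finset (Fin n)) :
    Fin n → Fin n :=
  fun i => if i ∈ J ∧ μ (h i) + (i : ℕ) = ν i + ((h i : ℕ)) then
      ⟨(h i : ℕ) - 1, Nat.lt_of_le_of_lt (Nat.sub_le _ _) (h i).isLt⟩
    else h i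

open Classical in
/-- The conjugacy class of `w` in the symmetric group, as a finset. -/
noncomputable def conjClass {n : ℕ} (w : Perm (Fin n)) : Finset (Perm (Fin n)) :=
  Finset.univ.filter (fun v => IsConj w v)

/-- The Stanley–Stembridge character
`Γ_h(w) = (n! / |C(w)|) · Σ_{w' ∈ C(w)} ĥ(w')`. -/
noncomputable def GammaH {n : ℕ} (h : Fin n → Fin n) (w : Perm (Fin n)) : ℚ :=
  ((n.factorial : ℚ) / ((conjClass w).card : ℚ)) * ∑ v ∈ conjClass w, (hhat h v : ℚ)

/-- The immanant character
`Γ^θ_{μ/ν}(w) = (n! / |C(w)|) · Σ_{w' ∈ C(w)} K_{θ, μ+δ-w'(ν+δ)}`. -/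
noncomputable def GammaTheta {n : ℕ} (shape : ℕ → ℕ) (μ ν : Fin n → ℕ)
    (w : Perm (Fin n)) : ℚ :=
  ((n.factorial : ℚ) / ((conjClass w).card : ℚ)) *
    ∑ v ∈ conjClass w, (kostkaZ shape (extendSeq (hatSeq μ ν v)) : ℚ)

/-- A downward-closed finset of naturals is an initial segment. -/
lemma lowerset_eq_range (t : Finset ℕ) (ht : ∀ a ∈ t, ∀ b ≤ a, b ∈ t) :
    t = Finset.range t.card := by
  have h1 : ∀ a ∈ t, a < t.card := by
    intro a ha
    have : Finset.range (a+1) ⊆ t := fun b hb =>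
      ht a ha b (Nat.lt_succ_iff.mp (Finset.mem_range.mp hb))
    simpa using Finset.card_le_card this
  have h2 : Finset.range t.card ⊆ t := by
    intro x hx
    by_contra hxt
    have hsub : t ⊆ Finset.range x := by
      intro a ha
      simp only [Finset.mem_range]
      by_contra hax
      exact hxt (ht a ha x (Nat.le_of_not_lt hax))
    have := Finset.card_le_card hsub
    simp only [Finset.card_range] at this
    exact absurd (Finset.mem_range.mp hx) (by omega)
  exact Finset.Subset.antisymm (fun a ha => Finset.mem_range.mpr (h1 a ha)) h2

lemma lt_count_iff (L : ℕ) (f : ℕ → ℕ)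
    (hf : ∀ ⦃a b : ℕ⦄, a ≤ b → b < L → f a ≤ f b)
    (m : ℕ) (j : ℕ) (hj : j < L) :
    f j < m ↔ j < ((Finset.range L).filter (fun j => f j < m)).card := by
  have heq : (Finset.range L).filter (fun j => f j < m) =
      Finset.range (((Finset.range L).filter (fun j => f j < m)).card) := by
    apply lowerset_eq_range
    intro a ha b hb
    simp only [Finset.mem_filter, Finset.mem_range] at ha ⊢
    exact ⟨lt_of_le_of_lt hb ha.1, lt_of_le_of_lt (hf hb ha.1) ha.2⟩
  constructor
  · intro hm
    have : j ∈ (Finset.range L).filter (fun j => f j < m) := by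
      simp [hj, hm]
    rw [heq] at this; exact Finset.mem_range.mp this
  · intro hm
    have : j ∈ (Finset.range L).filter (fun j => f j < m) := by
      rw [heq]; exact Finset.mem_range.mpr hm
    exact (Finset.mem_filter.mp this).2

lemma count_lt_eq_sum (L : ℕ) (f : ℕ → ℕ) (m : ℕ) :
    ((Finset.range L).filter (fun j => f j < m)).card =
      ∑ m' ∈ Finset.range m, ((Finset.range L).filter (fun j => f j = m')).card := by
  rw [← Finset.card_biUnion]
  · congr 1
    ext j
    simp only [Finset.mem_filter, Finset.mem_biUnion, Finset.mem_range]
    constructor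
    · rintro ⟨hjL, hfm⟩; exact ⟨f j, hfm, hjL, rfl⟩
    · rintro ⟨m', hm', hjL, rfl⟩; exact ⟨hjL, hm'⟩
  · intro a _ b _ hab
    simp only [Finset.disjoint_left, Finset.mem_filter]
    rintro x ⟨_, rfl⟩ ⟨_, h⟩
    exact hab h

/-- Two monotone sequences on `[0, L)` with the same value-counts agree. -/
lemma mono_count_unique (L : ℕ) (f g : ℕ → ℕ)
    (hf : ∀ ⦃a b : ℕ⦄, a ≤ b → b < L → f a ≤ f b)
    (hg : ∀ ⦃a b : ℕ⦄, a ≤ b → b < L → g a ≤ g b)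
    (hcount : ∀ m, ((Finset.range L).filter (fun j => f j = m)).card =
      ((Finset.range L).filter (fun j => g j = m)).card) :
    ∀ j < L, f j = g j := by
  intro j hj
  have key : ∀ m, (f j < m ↔ g j < m) := by
    intro m
    rw [lt_count_iff L f hf m j hj, lt_count_iff L g hg m j hj,
      count_lt_eq_sum, count_lt_eq_sum]
    have : ∀ m' ∈ Finset.range m, ((Finset.range L).filter (fun j => f j = m')).card =
        ((Finset.range L).filter (fun j => g j = m')).card := fun m' _ => hcount m'
    rw [Finset.sum_congr rfl this]
  have h1 := (key (g j + 1)).mpr (Nat.lt_succ_self _)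
  have h2 := (key (f j + 1)).mp (Nat.lt_succ_self _)
  omega


def cum (c : ℕ → ℕ) (m : ℕ) : ℕ := ∑ i ∈ Finset.range m, c i

noncomputable def ent (c : ℕ → ℕ) (j : ℕ) : ℕ := sInf {m | j < cum c (m+1)}

lemma cum_mono (c : ℕ → ℕ) : Monotone (cum c) := fun a b hab =>
  Finset.sum_le_sum_of_subset (Finset.range_subset_range.mpr hab)

lemma cum_succ (c : ℕ → ℕ) (m : ℕ) : cum c (m+1) = cum c m + c m :=
  Finset.sum_range_succ c m

lemma cum_stable (c : ℕ → ℕ) (n : ℕ) (hc : ∀ m, n ≤ m → c m = 0) {m : ℕ} (hm : n ≤ m) :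
    cum c m = cum c n := by
  induction m with
  | zero => rw [Nat.le_zero.mp hm]
  | succ m ih =>
    rcases Nat.lt_or_ge m n with h | h
    · have : m + 1 = n := by omega
      rw [this]
    · rw [cum_succ, ih h, hc m h, add_zero]

lemma cum_le (c : ℕ → ℕ) (n : ℕ) (hc : ∀ m, n ≤ m → c m = 0) (m : ℕ) :
    cum c m ≤ cum c n := by
  rcases le_or_gt m n with h | h
  · exact cum_mono c h
  · rw [cum_stable c n hc h.le]

lemma ent_le_iff (c : ℕ → ℕ) (n : ℕ) (hc : ∀ m, n ≤ m → c m = 0)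
    {j : ℕ} (hj : j < cum c n) (m : ℕ) :
    ent c j ≤ m ↔ j < cum c (m+1) := by
  have hne : ∃ x, x ∈ {m | j < cum c (m+1)} := ⟨n, by
    simpa [Set.mem_setOf_eq, cum_stable c n hc (Nat.le_succ n)] using hj⟩
  constructor
  · intro h
    have hmem := Nat.sInf_mem hne
    simp only [Set.mem_setOf_eq] at hmem
    have h' : sInf {m | j < cum c (m+1)} ≤ m := h
    exact lt_of_lt_of_le hmem (cum_mono c (by omega))
  · intro h
    exact Nat.sInf_le h

lemma ent_eq_iff (c : ℕ → ℕ) (n : ℕ) (hc : ∀ m, n ≤ m → c m = 0)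
    {j : ℕ} (hj : j < cum c n) (m : ℕ) :
    ent c j = m ↔ cum c m ≤ j ∧ j < cum c (m+1) := by
  constructor
  · rintro rfl
    refine ⟨?_, (ent_le_iff c n hc hj _).mp le_rfl⟩
    rcases Nat.eq_zero_or_pos (ent c j) with h0 | h0
    · simp [h0, cum]
    · by_contra hlt
      have := (ent_le_iff c n hc hj (ent c j - 1)).mpr (by
        have : ent c j - 1 + 1 = ent c j := by omega
        rw [this]; omega)
      omega
  · rintro ⟨h1, h2⟩
    have hle : ent c j ≤ m := (ent_le_iff c n hc hj m).mpr h2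
    by_contra hne
    have hlt : ent c j < m := by omega
    have := (ent_le_iff c n hc hj (ent c j)).mp le_rfl
    have := cum_mono c (show ent c j + 1 ≤ m by omega)
    omega

lemma ent_mono (c : ℕ → ℕ) (n : ℕ) (hc : ∀ m, n ≤ m → c m = 0)
    {j j' : ℕ} (hjj' : j ≤ j') (hj' : j' < cum c n) :
    ent c j ≤ ent c j' := by
  have hj : j < cum c n := lt_of_le_of_lt hjj' hj'
  rw [ent_le_iff c n hc hj]
  exact lt_of_le_of_lt hjj' ((ent_le_iff c n hc hj' _).mp le_rfl)

lemma ent_count (c : ℕ → ℕ) (n : ℕ) (hc : ∀ m, n ≤ m → c m = 0) (m : ℕ) :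
    ((Finset.range (cum c n)).filter (fun j => ent c j = m)).card = c m := by
  have : (Finset.range (cum c n)).filter (fun j => ent c j = m) =
      Finset.Ico (cum c m) (cum c (m+1)) := by
    ext j
    simp only [Finset.mem_filter, Finset.mem_range, Finset.mem_Ico]
    constructor
    · rintro ⟨hjL, hent⟩
      exact (ent_eq_iff c n hc hjL m).mp hent
    · rintro ⟨h1, h2⟩
      have hjL : j < cum c n := lt_of_lt_of_le h2 (cum_le c n hc _)
      exact ⟨hjL, (ent_eq_iff c n hc hjL m).mpr ⟨h1, h2⟩⟩
  rw [this, Nat.card_Ico, cum_succ]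
  omega

lemma ent_zero (c : ℕ → ℕ) (n : ℕ) (hc : ∀ m, n ≤ m → c m = 0)
    (h0 : 0 < cum c n) {m0 : ℕ} (hm0 : c m0 ≠ 0)
    (hmin : ∀ m, c m ≠ 0 → m0 ≤ m) : ent c 0 = m0 := by
  rw [ent_eq_iff c n hc h0]
  constructor
  · have : cum c m0 = 0 := by
      apply Finset.sum_eq_zero
      intro i hi
      by_contra hci
      exact absurd (hmin i hci) (by simp at hi; omega)
    omega
  · rw [cum_succ]
    have : cum c m0 = 0 := by
      apply Finset.sum_eq_zero
      intro i hi
      by_contra hci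
      exact absurd (hmin i hci) (by simp at hi; omega)
    omega



def cSub (c : ℕ → ℕ) (S : Finset ℕ) : ℕ → ℕ := fun m => c m - (if m ∈ S then 1 else 0)

noncomputable def phi (c : ℕ → ℕ) (n k : ℕ) (S : Finset ℕ) : ℕ → ℕ → ℕ :=
  fun i j =>
    if i = 0 ∧ j < cum (cSub c S) n then ent (cSub c S) j
    else if 1 ≤ i ∧ i ≤ k ∧ j = 0 then (S.sort (· ≤ ·)).getD (i-1) 0
    else 0

lemma count_of_injOn (k : ℕ) (f : ℕ → ℕ) (hinj : Set.InjOn f (Finset.range k)) (m : ℕ) :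
    ((Finset.range k).filter (fun t => f t = m)).card =
      if m ∈ (Finset.range k).image f then 1 else 0 := by
  split_ifs with hm
  · obtain ⟨t0, ht0, rfl⟩ := Finset.mem_image.mp hm
    rw [Finset.card_eq_one]
    refine ⟨t0, ?_⟩
    ext t
    simp only [Finset.mem_filter, Finset.mem_singleton, Finset.mem_range]
    constructor
    · rintro ⟨htk, hft⟩
      exact hinj (by simpa using htk) (by simpa using Finset.mem_range.mp ht0) hft
    · rintro rfl
      exact ⟨Finset.mem_range.mp ht0, rfl⟩
  · rw [Finset.card_eq_zero, Finset.filter_eq_empty_iff]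
    intro t ht hft
    exact hm (Finset.mem_image.mpr ⟨t, ht, hft⟩)

lemma hook_content_card (N k : ℕ) (T : ℕ → ℕ → ℕ) (m : ℕ) :
    {p : ℕ × ℕ | p.2 < hookShape N k p.1 ∧ T p.1 p.2 = m}.ncard =
      ((Finset.range (N-k)).filter (fun j => T 0 j = m)).card +
      ((Finset.Icc 1 k).filter (fun i => T i 0 = m)).card := by
  have hset : {p : ℕ × ℕ | p.2 < hookShape N k p.1 ∧ T p.1 p.2 = m} =
      ↑((((Finset.range (N-k)).filter (fun j => T 0 j = m)).map
          ⟨fun j => ((0:ℕ), j), fun a b h => by simpa using h⟩) ∪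
        (((Finset.Icc 1 k).filter (fun i => T i 0 = m)).map
          ⟨fun i => (i, (0:ℕ)), fun a b h => by simpa using h⟩)) := by
    ext ⟨i, j⟩
    simp only [Set.mem_setOf_eq, Finset.coe_union, Set.mem_union, Finset.coe_map,
      Set.mem_image, Finset.mem_coe, Finset.mem_filter, Finset.mem_range, Finset.mem_Icc,
      Function.Embedding.coeFn_mk, Prod.mk.injEq, hookShape]
    constructor
    · rintro ⟨hshape, hT⟩
      by_cases hi : i = 0
      · subst hi
        simp only [if_pos rfl] at hshape
        exact Or.inl ⟨j, ⟨⟨hshape, hT⟩, rfl⟩⟩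
      · simp only [if_neg hi] at hshape
        by_cases hik : i ≤ k
        · simp only [if_pos hik] at hshape
          have hj : j = 0 := by omega
          subst hj
          exact Or.inr ⟨i, ⟨⟨⟨by omega, hik⟩, hT⟩, rfl⟩⟩
        · simp [if_neg hik] at hshape
    · rintro (⟨j', ⟨⟨hj', hT⟩, h12⟩⟩ | ⟨i', ⟨⟨⟨hi1, hi2⟩, hT⟩, h12⟩⟩)
      · obtain ⟨h1, h2⟩ := Prod.mk.inj (show ((0:ℕ), j') = (i, j) from h12)
        subst h1; subst h2; simp only [if_pos rfl]; exact ⟨hj', hT⟩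
      · obtain ⟨h1, h2⟩ := Prod.mk.inj (show (i', (0:ℕ)) = (i, j) from h12)
        subst h1; subst h2
        refine ⟨?_, hT⟩
        rw [if_neg (by omega), if_pos hi2]
        omega
  rw [hset, Set.ncard_coe_finset, Finset.card_union_of_disjoint, Finset.card_map,
    Finset.card_map]
  simp only [Finset.disjoint_left, Finset.mem_map, Function.Embedding.coeFn_mk]
  rintro ⟨a, b⟩ ⟨j', _, hj'⟩ ⟨i', hi', hii'⟩
  simp only [Finset.mem_filter, Finset.mem_Icc] at hi'
  have : a = 0 := by cases hj'; rfl
  have : a = i' := by cases hii'; rfl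
  omega

lemma count_of_injOn' (A : Finset ℕ) (f : ℕ → ℕ) (hinj : Set.InjOn f ↑A) (m : ℕ) :
    (A.filter (fun t => f t = m)).card = if m ∈ A.image f then 1 else 0 := by
  split_ifs with hm
  · obtain ⟨t0, ht0, rfl⟩ := Finset.mem_image.mp hm
    rw [Finset.card_eq_one]
    refine ⟨t0, ?_⟩
    ext t
    simp only [Finset.mem_filter, Finset.mem_singleton]
    constructor
    · rintro ⟨ht, hft⟩
      exact hinj (Finset.mem_coe.mpr ht) (Finset.mem_coe.mpr ht0) hft
    · rintro rfl
      exact ⟨ht0, rfl⟩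
  · rw [Finset.card_eq_zero, Finset.filter_eq_empty_iff]
    intro t ht hft
    exact hm (Finset.mem_image.mpr ⟨t, ht, hft⟩)

lemma row_chain {N k : ℕ} {T : ℕ → ℕ → ℕ} (hT : IsSSYT (hookShape N k) T) :
    ∀ a b, a ≤ b → b < N - k → T 0 a ≤ T 0 b := by
  intro a b hab hb
  induction b with
  | zero => have : a = 0 := by omega
            subst this; exact le_rfl
  | succ b ih =>
    rcases Nat.eq_or_lt_of_le hab with rfl | h
    · exact le_rfl
    · exact le_trans (ih (by omega) (by omega))
        (hT.1 0 b (by simp only [hookShape]; norm_num; omega))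

lemma col_chain {N k : ℕ} {T : ℕ → ℕ → ℕ} (hT : IsSSYT (hookShape N k) T) :
    ∀ i i', i < i' → i' ≤ k → T i 0 < T i' 0 := by
  intro i i' hii' hi'k
  induction i' with
  | zero => omega
  | succ b ih =>
    have hstep : T b 0 < T (b+1) 0 := hT.2.1 b 0 (by
      simp only [hookShape, if_neg (Nat.succ_ne_zero b), if_pos hi'k]; omega)
    rcases Nat.lt_or_ge i b with h | h
    · exact lt_trans (ih h (by omega)) hstep
    · have : i = b := by omega
      subst this; exact hstep

section PhiLemmas

variable {c : ℕ → ℕ} {n N k : ℕ} {S : Finset ℕ} {m0 : ℕ}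

lemma cSub_zero (hc : ∀ m, n ≤ m → c m = 0) (m : ℕ) (hm : n ≤ m) : cSub c S m = 0 := by
  simp [cSub, hc m hm]

lemma cSub_ne {m : ℕ} (h : cSub c S m ≠ 0) : c m ≠ 0 := by
  simp only [cSub] at h; omega

lemma cum_cSub (hSc : ∀ m ∈ S, c m ≠ 0) (hSn : ∀ m ∈ S, m < n) :
    cum (cSub c S) n = cum c n - S.card := by
  unfold cum cSub
  rw [Finset.sum_tsub_distrib]
  · congr 1
    rw [Finset.sum_boole, Nat.cast_id]
    congr 1
    ext m
    simp only [Finset.mem_filter, Finset.mem_range]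
    exact ⟨fun h => h.2, fun h => ⟨hSn m h, h⟩⟩
  · intro x _
    split_ifs with hx
    · have := hSc x hx; omega
    · omega

lemma phi_row {j : ℕ} (hj : j < cum (cSub c S) n) :
    phi c n k S 0 j = ent (cSub c S) j := by
  simp only [phi]; rw [if_pos ⟨trivial, hj⟩]

lemma phi_col {i : ℕ} (h1 : 1 ≤ i) (h2 : i ≤ k) :
    phi c n k S i 0 = (S.sort (· ≤ ·)).getD (i-1) 0 := by
  simp only [phi]
  rw [if_neg (by rintro ⟨rfl, -⟩; omega), if_pos ⟨h1, h2, trivial⟩]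

lemma sort_getD_mono (hScard : S.card = k) :
    ∀ ⦃a b : ℕ⦄, a ≤ b → b < k → (S.sort (· ≤ ·)).getD a 0 ≤ (S.sort (· ≤ ·)).getD b 0 := by
  intro a b hab hb
  have hlen : (S.sort (· ≤ ·)).length = k := by rw [Finset.length_sort, hScard]
  rw [List.getD_eq_getElem _ _ (by omega), List.getD_eq_getElem _ _ (by omega)]
  have := (Finset.sortedLT_sort S).strictMono_get.monotone
    (show (⟨a, by omega⟩ : Fin (S.sort (· ≤ ·)).length) ≤ ⟨b, by omega⟩ from by
      simp [Fin.le_def]; omega)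
  simpa [List.get_eq_getElem] using this

lemma sort_getD_injOn (hScard : S.card = k) :
    Set.InjOn (fun t => (S.sort (· ≤ ·)).getD t 0) ↑(Finset.range k) := by
  intro a ha b hb hab
  simp only [Finset.coe_range, Set.mem_Iio] at ha hb
  have hlen : (S.sort (· ≤ ·)).length = k := by rw [Finset.length_sort, hScard]
  have hab' : (S.sort (· ≤ ·)).getD a 0 = (S.sort (· ≤ ·)).getD b 0 := hab
  rw [List.getD_eq_getElem (S.sort (· ≤ ·)) 0 (show a < (S.sort (· ≤ ·)).length by omega),
    List.getD_eq_getElem (S.sort (· ≤ ·)) 0 (show b < (S.sort (· ≤ ·)).length by omega)] at hab'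
  have := (Finset.sortedLT_sort S).strictMono_get.injective
    (show (S.sort (· ≤ ·)).get ⟨a, by omega⟩ = (S.sort (· ≤ ·)).get ⟨b, by omega⟩ from by
      simpa [List.get_eq_getElem] using hab')
  simpa [Fin.mk.injEq] using this

lemma sort_getD_image (hScard : S.card = k) :
    (Finset.range k).image (fun t => (S.sort (· ≤ ·)).getD t 0) = S := by
  have hlen : (S.sort (· ≤ ·)).length = k := by rw [Finset.length_sort, hScard]
  ext m
  simp only [Finset.mem_image, Finset.mem_range]
  constructor
  · rintro ⟨t, ht, rfl⟩
    rw [List.getD_eq_getElem _ _ (by omega)]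
    exact (Finset.mem_sort _).mp (List.getElem_mem _)
  · intro hm
    obtain ⟨⟨t, ht⟩, hget⟩ := List.mem_iff_get.mp ((Finset.mem_sort (· ≤ ·)).mpr hm)
    refine ⟨t, by omega, ?_⟩
    rw [List.getD_eq_getElem _ _ ht]
    simpa [List.get_eq_getElem] using hget

lemma col_reindex (k : ℕ) (f : ℕ → ℕ) (P : ℕ → Prop) [DecidablePred P] :
    ((Finset.Icc 1 k).filter (fun i => P (f i))).card =
      ((Finset.range k).filter (fun t => P (f (t+1)))).card := by
  apply Finset.card_nbij' (fun i => i - 1) (fun t => t + 1)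
  · intro a ha
    simp only [Finset.mem_coe, Finset.mem_filter, Finset.mem_Icc, Finset.mem_range] at ha ⊢
    have : a - 1 + 1 = a := by omega
    rw [this]
    exact ⟨by omega, ha.2⟩
  · intro a ha
    simp only [Finset.mem_coe, Finset.mem_filter, Finset.mem_Icc, Finset.mem_range] at ha ⊢
    exact ⟨by omega, ha.2⟩
  · intro a ha
    simp only [Finset.mem_coe, Finset.mem_filter, Finset.mem_Icc] at ha
    dsimp only
    omega
  · intro a _
    dsimp only
    omega

end PhiLemmas

section PhiMain

variable {c : ℕ → ℕ} {n N k : ℕ} {S : Finset ℕ} {m0 : ℕ}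

lemma phi_isSSYT (hc : ∀ m, n ≤ m → c m = 0) (hsum : cum c n = N) (hkN : k < N)
    (hScard : S.card = k) (hSc : ∀ m ∈ S, c m ≠ 0) (hSn : ∀ m ∈ S, m < n)
    (hm0c : c m0 ≠ 0) (hm0min : ∀ m, c m ≠ 0 → m0 ≤ m) (hSm0 : ∀ m ∈ S, m0 < m) :
    IsSSYT (hookShape N k) (phi c n k S) := by
  have hL : cum (cSub c S) n = N - k := by rw [cum_cSub hSc hSn, hsum, hScard]
  have hcS : ∀ m, n ≤ m → cSub c S m = 0 := fun m hm => cSub_zero hc m hm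
  have hlen : (S.sort (· ≤ ·)).length = k := by rw [Finset.length_sort, hScard]
  have hm0S : m0 ∉ S := fun h => lt_irrefl _ (hSm0 _ h)
  have hcSm0 : cSub c S m0 ≠ 0 := by simp only [cSub, if_neg hm0S]; omega
  have hminS : ∀ m, cSub c S m ≠ 0 → m0 ≤ m := fun m h => hm0min m (cSub_ne h)
  refine ⟨?_, ?_, ?_⟩
  · intro i j hj
    rcases Nat.eq_zero_or_pos i with rfl | hi
    · have hNk : j + 1 < N - k := by simpa [hookShape] using hj
      rw [phi_row (by omega), phi_row (by omega)]
      exact ent_mono _ n hcS (Nat.le_succ j) (by omega)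
    · exfalso
      have : hookShape N k i ≤ 1 := by unfold hookShape; split_ifs <;> omega
      omega
  · intro i j hj
    have hik : i + 1 ≤ k := by
      by_contra hik
      have : hookShape N k (i+1) = 0 := by
        unfold hookShape; rw [if_neg (Nat.succ_ne_zero i), if_neg hik]
      omega
    have hj0 : j = 0 := by
      have : hookShape N k (i+1) = 1 := by
        unfold hookShape; rw [if_neg (Nat.succ_ne_zero i), if_pos hik]
      omega
    subst hj0
    rcases Nat.eq_zero_or_pos i with rfl | hi
    · rw [phi_row (show (0:ℕ) < cum (cSub c S) n by omega), phi_col (le_refl 1) hik]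
      have h0 : ent (cSub c S) 0 = m0 := ent_zero _ n hcS (by omega) hcSm0 hminS
      rw [h0]
      have hmem : (S.sort (· ≤ ·)).getD 0 0 ∈ S := by
        rw [List.getD_eq_getElem (S.sort (· ≤ ·)) 0 (show 0 < (S.sort (· ≤ ·)).length by omega)]
        exact (Finset.mem_sort _).mp (List.getElem_mem _)
      exact hSm0 _ hmem
    · rw [phi_col hi (by omega), phi_col (by omega) hik]
      rw [List.getD_eq_getElem _ _ (show i - 1 < _ by omega),
        List.getD_eq_getElem _ _ (show i + 1 - 1 < _ by omega)]
      have := (Finset.sortedLT_sort S).strictMono_get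
        (show (⟨i - 1, by omega⟩ : Fin (S.sort (· ≤ ·)).length) < ⟨i + 1 - 1, by omega⟩ from by
          simp [Fin.lt_def]; omega)
      simpa [List.get_eq_getElem] using this
  · intro i j hij
    simp only [phi]
    split_ifs with h1 h2
    · exfalso
      obtain ⟨rfl, hjL⟩ := h1
      rw [hL] at hjL
      unfold hookShape at hij
      rw [if_pos rfl] at hij
      omega
    · exfalso
      obtain ⟨hi1, hik, rfl⟩ := h2
      unfold hookShape at hij
      split_ifs at hij <;> omega
    · rfl

lemma phi_col_image (hScard : S.card = k) :
    (Finset.Icc 1 k).image (fun i => phi c n k S i 0) = S := by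
  have himg : (Finset.Icc 1 k).image (fun i => i - 1) = Finset.range k := by
    ext t
    simp only [Finset.mem_image, Finset.mem_Icc, Finset.mem_range]
    constructor
    · rintro ⟨i, ⟨h1, h2⟩, rfl⟩; omega
    · intro ht; exact ⟨t + 1, ⟨by omega, by omega⟩, by omega⟩
  calc (Finset.Icc 1 k).image (fun i => phi c n k S i 0)
      = (Finset.Icc 1 k).image ((fun t => (S.sort (· ≤ ·)).getD t 0) ∘ (fun i => i - 1)) := by
        apply Finset.image_congr
        intro i hi
        simp only [Finset.coe_Icc, Set.mem_Icc] at hi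
        exact phi_col hi.1 hi.2
    _ = ((Finset.Icc 1 k).image (fun i => i - 1)).image (fun t => (S.sort (· ≤ ·)).getD t 0) :=
        (Finset.image_image).symm
    _ = (Finset.range k).image (fun t => (S.sort (· ≤ ·)).getD t 0) := by rw [himg]
    _ = S := sort_getD_image hScard

lemma phi_content (hc : ∀ m, n ≤ m → c m = 0) (hsum : cum c n = N) (hkN : k < N)
    (hScard : S.card = k) (hSc : ∀ m ∈ S, c m ≠ 0) (hSn : ∀ m ∈ S, m < n)
    (m : ℕ) :
    {p : ℕ × ℕ | p.2 < hookShape N k p.1 ∧ phi c n k S p.1 p.2 = m}.ncard = c m := by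
  have hL : cum (cSub c S) n = N - k := by rw [cum_cSub hSc hSn, hsum, hScard]
  have hcS : ∀ m, n ≤ m → cSub c S m = 0 := fun m hm => cSub_zero hc m hm
  have hlen : (S.sort (· ≤ ·)).length = k := by rw [Finset.length_sort, hScard]
  rw [hook_content_card]
  have hrow : ((Finset.range (N-k)).filter (fun j => phi c n k S 0 j = m)).card
      = cSub c S m := by
    rw [← hL, ← ent_count (cSub c S) n hcS m]
    congr 1
    apply Finset.filter_congr
    intro j hj
    simp only [Finset.mem_range] at hj
    rw [phi_row hj]
  have hcol : ((Finset.Icc 1 k).filter (fun i => phi c n k S i 0 = m)).card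
      = if m ∈ S then 1 else 0 := by
    rw [count_of_injOn' _ _ ?hinj m, phi_col_image hScard]
    case hinj =>
      intro a ha b hb hab
      simp only [Finset.coe_Icc, Set.mem_Icc] at ha hb
      simp only [phi_col ha.1 ha.2, phi_col hb.1 hb.2] at hab
      have := sort_getD_injOn hScard (show a - 1 ∈ ↑(Finset.range k) by
          simp only [Finset.mem_coe, Finset.mem_range]; omega)
        (show b - 1 ∈ ↑(Finset.range k) by
          simp only [Finset.mem_coe, Finset.mem_range]; omega) hab
      omega
  rw [hrow, hcol]
  by_cases hm : m ∈ S
  · have := hSc m hm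
    simp only [cSub, if_pos hm]
    omega
  · simp only [cSub, if_neg hm]
    omega

end PhiMain

section PhiSurj

variable {c : ℕ → ℕ} {n N k : ℕ} {m0 : ℕ}

lemma phi_surj (hc : ∀ m, n ≤ m → c m = 0) (hsum : cum c n = N) (hkN : k < N)
    (hm0c : c m0 ≠ 0) (hm0min : ∀ m, c m ≠ 0 → m0 ≤ m)
    (T : ℕ → ℕ → ℕ) (hT : IsSSYT (hookShape N k) T)
    (hcont : ∀ m, {p : ℕ × ℕ | p.2 < hookShape N k p.1 ∧ T p.1 p.2 = m}.ncard = c m) :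
    ∃ S : Finset ℕ, S.card = k ∧ (∀ m ∈ S, c m ≠ 0) ∧ (∀ m ∈ S, m0 < m) ∧
      T = phi c n k S := by
  classical
  have hNk : 0 < N - k := by omega
  have hcc : ∀ m, ((Finset.range (N-k)).filter (fun j => T 0 j = m)).card +
      ((Finset.Icc 1 k).filter (fun i => T i 0 = m)).card = c m := fun m => by
    rw [← hook_content_card]; exact hcont m
  have hinjT : Set.InjOn (fun i => T i 0) ↑(Finset.Icc 1 k) := by
    intro a ha b hb hab
    simp only [Finset.coe_Icc, Set.mem_Icc] at ha hb
    simp only at hab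
    by_contra hne
    rcases Nat.lt_or_ge a b with hl | hl
    · exact absurd hab (Nat.ne_of_lt (col_chain hT a b hl hb.2))
    · have : b < a := by omega
      exact absurd hab.symm (Nat.ne_of_lt (col_chain hT b a this ha.2))
  set S := (Finset.Icc 1 k).image (fun i => T i 0) with hSdef
  have hScard : S.card = k := by
    rw [hSdef, Finset.card_image_of_injOn hinjT, Nat.card_Icc]; omega
  have hcolT : ∀ m, ((Finset.Icc 1 k).filter (fun i => T i 0 = m)).card =
      if m ∈ S then 1 else 0 := fun m => count_of_injOn' _ _ hinjT m
  have hrowT : ∀ m, ((Finset.range (N-k)).filter (fun j => T 0 j = m)).card =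
      cSub c S m := by
    intro m
    have h1 := hcc m
    have h2 := hcolT m
    simp only [cSub]
    split_ifs at h2 ⊢ with hm <;> omega
  have hattain : ∀ m, c m ≠ 0 → T 0 0 ≤ m := by
    intro m hm
    have h1 := hcc m
    by_cases hrow0 : ((Finset.range (N-k)).filter (fun j => T 0 j = m)).card = 0
    · have hpos : 0 < ((Finset.Icc 1 k).filter (fun i => T i 0 = m)).card := by omega
      obtain ⟨i, hi⟩ := Finset.card_pos.mp hpos
      simp only [Finset.mem_filter, Finset.mem_Icc] at hi
      have := col_chain hT 0 i (by omega) hi.1.2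
      omega
    · have hpos : 0 < ((Finset.range (N-k)).filter (fun j => T 0 j = m)).card :=
        Nat.pos_of_ne_zero hrow0
      obtain ⟨j, hj⟩ := Finset.card_pos.mp hpos
      simp only [Finset.mem_filter, Finset.mem_range] at hj
      have := row_chain hT 0 j (Nat.zero_le j) hj.1
      omega
  have hT00 : T 0 0 = m0 := by
    have h1 : c (T 0 0) ≠ 0 := by
      have hcc0 := hcc (T 0 0)
      have h0 : (0:ℕ) ∈ (Finset.range (N-k)).filter (fun j => T 0 j = T 0 0) := by
        simp [hNk]
      have := Finset.card_pos.mpr ⟨0, h0⟩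
      omega
    exact le_antisymm (hattain m0 hm0c) (hm0min _ h1)
  have hSc : ∀ m ∈ S, c m ≠ 0 := by
    intro m hm
    have h2 := hcolT m
    rw [if_pos hm] at h2
    have := hcc m
    omega
  have hSm0 : ∀ m ∈ S, m0 < m := by
    intro m hm
    obtain ⟨i, hi, rfl⟩ := Finset.mem_image.mp hm
    simp only [Finset.mem_Icc] at hi
    have := col_chain hT 0 i (by omega) hi.2
    omega
  have hSn : ∀ m ∈ S, m < n := by
    intro m hm
    by_contra hmn
    exact hSc m hm (hc m (by omega))
  refine ⟨S, hScard, hSc, hSm0, ?_⟩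
  have hL : cum (cSub c S) n = N - k := by rw [cum_cSub hSc hSn, hsum, hScard]
  have hcS : ∀ m, n ≤ m → cSub c S m = 0 := fun m hm => cSub_zero hc m hm
  have hlen : (S.sort (· ≤ ·)).length = k := by rw [Finset.length_sort, hScard]
  have hphiS : IsSSYT (hookShape N k) (phi c n k S) :=
    phi_isSSYT hc hsum hkN hScard hSc hSn hm0c hm0min hSm0
  -- row identification
  have hrow_eq : ∀ j < N - k, T 0 j = ent (cSub c S) j := by
    apply mono_count_unique (N - k) (fun j => T 0 j) (fun j => ent (cSub c S) j)
      (fun a b hab hb => row_chain hT a b hab hb)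
      (fun a b hab hb => ent_mono (cSub c S) n hcS hab (by omega))
    intro m
    rw [hrowT m]
    rw [show Finset.range (N - k) = Finset.range (cum (cSub c S) n) from by rw [hL]]
    exact (ent_count (cSub c S) n hcS m).symm
  -- column identification
  have hcol_eq : ∀ t < k, T (t+1) 0 = (S.sort (· ≤ ·)).getD t 0 := by
    apply mono_count_unique k (fun t => T (t+1) 0) (fun t => (S.sort (· ≤ ·)).getD t 0)
      (fun a b hab hb => by
        rcases Nat.eq_or_lt_of_le hab with rfl | hl
        · exact le_rfl
        · exact le_of_lt (col_chain hT (a+1) (b+1) (by omega) (by omega)))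
      (sort_getD_mono hScard)
    intro m
    have h1 : ((Finset.range k).filter (fun t => T (t+1) 0 = m)).card =
        ((Finset.Icc 1 k).filter (fun i => T i 0 = m)).card :=
      (col_reindex k (fun i => T i 0) (fun x => x = m)).symm
    rw [h1, hcolT m, count_of_injOn' _ _ (sort_getD_injOn hScard) m,
      sort_getD_image hScard]
  funext i j
  rcases Nat.eq_zero_or_pos i with rfl | hi
  · rcases Nat.lt_or_ge j (N-k) with hj | hj
    · rw [phi_row (show j < cum (cSub c S) n by omega)]
      exact hrow_eq j hj
    · rw [hT.2.2 0 j (by unfold hookShape; rw [if_pos rfl]; omega),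
        hphiS.2.2 0 j (by unfold hookShape; rw [if_pos rfl]; omega)]
  · rcases Nat.lt_or_ge k i with hik | hik
    · rw [hT.2.2 i j ?hsh, hphiS.2.2 i j ?hsh2]
      case hsh => unfold hookShape; rw [if_neg (by omega), if_neg (by omega)]; omega
      case hsh2 => unfold hookShape; rw [if_neg (by omega), if_neg (by omega)]; omega
    · rcases Nat.eq_zero_or_pos j with rfl | hj
      · rw [phi_col hi hik]
        have := hcol_eq (i-1) (by omega)
        rw [show i - 1 + 1 = i from by omega] at this
        exact this
      · rw [hT.2.2 i j (by unfold hookShape; rw [if_neg (by omega), if_pos (by omega)]; omega),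
          hphiS.2.2 i j (by unfold hookShape; rw [if_neg (by omega), if_pos (by omega)]; omega)]

end PhiSurj

theorem kostka_hook (c : ℕ → ℕ) (n N k : ℕ) (hc : ∀ m, n ≤ m → c m = 0)
    (hsum : cum c n = N) (hkN : k < N) :
    kostka (hookShape N k) c =
      ((((Finset.range n).filter (fun m => c m ≠ 0)).card - 1)).choose k := by
  classical
  set s := (Finset.range n).filter (fun m => c m ≠ 0) with hsdef
  have hsne : s.Nonempty := by
    rw [Finset.nonempty_iff_ne_empty]
    intro h
    have : cum c n = 0 := Finset.sum_eq_zero (fun m hm => by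
      by_contra hc0
      have : m ∈ s := Finset.mem_filter.mpr ⟨hm, hc0⟩
      simp [h] at this)
    omega
  set m0 := s.min' hsne with hm0def
  have hm0c : c m0 ≠ 0 := (Finset.mem_filter.mp (s.min'_mem hsne)).2
  have hmem_s : ∀ m, c m ≠ 0 → m ∈ s := by
    intro m hm
    refine Finset.mem_filter.mpr ⟨Finset.mem_range.mpr ?_, hm⟩
    by_contra hmn
    exact hm (hc m (by omega))
  have hm0min : ∀ m, c m ≠ 0 → m0 ≤ m := fun m hm => s.min'_le m (hmem_s m hm)
  have hset : {T : ℕ → ℕ → ℕ | IsSSYT (hookShape N k) T ∧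
      ∀ m : ℕ, {p : ℕ × ℕ | p.2 < hookShape N k p.1 ∧ T p.1 p.2 = m}.ncard = c m}
      = (fun S => phi c n k S) '' ↑((s.erase m0).powersetCard k) := by
    ext T
    simp only [Set.mem_setOf_eq, Set.mem_image, Finset.mem_coe, Finset.mem_powersetCard]
    constructor
    · rintro ⟨hT, hcont⟩
      obtain ⟨S, hScard, hSc, hSm0, rfl⟩ := phi_surj hc hsum hkN hm0c hm0min T hT hcont
      refine ⟨S, ⟨?_, hScard⟩, rfl⟩
      intro m hm
      exact Finset.mem_erase.mpr ⟨(ne_of_gt (hSm0 m hm)), hmem_s m (hSc m hm)⟩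
    · rintro ⟨S, ⟨hSsub, hScard⟩, rfl⟩
      have hSc : ∀ m ∈ S, c m ≠ 0 := fun m hm =>
        (Finset.mem_filter.mp (Finset.mem_of_mem_erase (hSsub hm))).2
      have hSn : ∀ m ∈ S, m < n := fun m hm =>
        Finset.mem_range.mp (Finset.mem_filter.mp (Finset.mem_of_mem_erase (hSsub hm))).1
      have hSm0 : ∀ m ∈ S, m0 < m := fun m hm =>
        lt_of_le_of_ne (hm0min m (hSc m hm)) (Ne.symm (Finset.ne_of_mem_erase (hSsub hm)))
      exact ⟨phi_isSSYT hc hsum hkN hScard hSc hSn hm0c hm0min hSm0,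
        phi_content hc hsum hkN hScard hSc hSn⟩
  rw [kostka, hset, Set.ncard_image_of_injOn ?inj, Set.ncard_coe_finset,
    Finset.card_powersetCard, Finset.card_erase_of_mem (s.min'_mem hsne)]
  case inj =>
    intro S1 h1 S2 h2 heq
    simp only [Finset.mem_coe, Finset.mem_powersetCard] at h1 h2
    have e1 := phi_col_image (c := c) (n := n) h1.2
    have e2 := phi_col_image (c := c) (n := n) h2.2
    rw [← e1, ← e2]
    congr 1
    ext i
    have := congrFun (congrFun (show phi c n k S1 = phi c n k S2 from heq) i) 0
    exact this

/-- Theorem 4.2: for a skew shape with no empty rows, a hook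
`θ = (N-k,1,...,1)` and any `w ∈ S_n`, the Kostka number `K_{θ, μ+δ-w(ν+δ)}`
equals the number of size-`k` subsets `J ⊆ [n-1]` with `w(i) ≤ h^J(i)` for all
`i`. -/
theorem stmt5 {n N k : ℕ} (μ ν : Fin n → ℕ) (hμ : Antitone μ) (hν : Antitone ν)
    (hlt : ∀ i, ν i < μ i) (hN : N = ∑ i : Fin n, (μ i - ν i)) (hk : k < N)
    (h : Fin n → Fin n) (hh : IsHessOf μ ν h) (w : Perm (Fin n)) :
    kostkaZ (hookShape N k) (extendSeq (hatSeq μ ν w)) =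
      (Finset.univ.filter (fun J : Finset (Fin n) =>
        (∀ i ∈ J, (i : ℕ) < n - 1) ∧ J.card = k ∧
          ∀ i, w i ≤ hJfun μ ν h J i)).card := by
  classical
  have hn : 0 < n := by
    rcases Nat.eq_zero_or_pos n with rfl | hn
    · simp at hN; omega
    · exact hn
  -- key order facts
  have keyle : ∀ (j i : Fin n), ((ν j : ℤ) + (i : ℕ) ≤ (μ i : ℤ) + (j : ℕ)) ↔ i ≤ h j := by
    intro j i
    constructor
    · intro hij
      exact (hh j).2 i (by exact_mod_cast hij)
    · intro hij
      have h1 := (hh j).1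
      have h2 : μ (h j) ≤ μ i := hμ hij
      have h3 : (i : ℕ) ≤ ((h j) : ℕ) := hij
      push_cast
      omega
  have keyzero : ∀ (j i : Fin n),
      ((μ i : ℤ) - (i : ℕ) = (ν j : ℤ) - (j : ℕ)) ↔
        (i = h j ∧ μ (h j) + (j : ℕ) = ν j + ((h j) : ℕ)) := by
    intro j i
    constructor
    · intro he
      have hile : i ≤ h j := (keyle j i).mp (by omega)
      have hnlt : ¬ i < h j := by
        intro hlti
        have hmu : μ (h j) ≤ μ i := hμ (le_of_lt hlti)
        have h1 := (hh j).1
        have h4 : (i : ℕ) < ((h j) : ℕ) := hlti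
        omega
      have hieq : i = h j := le_antisymm hile (le_of_not_gt hnlt)
      refine ⟨hieq, ?_⟩
      rw [← hieq]
      omega
    · rintro ⟨rfl, he⟩
      omega
  set E : Fin n → Prop := fun i => μ (h i) + (i : ℕ) = ν i + ((h i) : ℕ) with hE
  have hEh : ∀ i, E i → 1 ≤ ((h i) : ℕ) := by
    intro i hEi
    by_contra hhi
    have hh0 : h i = ⟨0, hn⟩ := by
      apply Fin.ext
      show ((h i : ℕ)) = 0
      omega
    have h1 : ν i ≤ ν ⟨0, hn⟩ := hν (by simp [Fin.le_def])
    have h2 := hlt (⟨0, hn⟩ : Fin n)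
    rw [hE] at hEi
    simp only [hh0] at hEi
    omega
  -- hat sequence facts
  have hat_eq : ∀ j : Fin n, hatSeq μ ν w (w j) =
      ((μ (w j) : ℤ) - ((w j : ℕ) : ℤ)) - ((ν j : ℤ) - ((j : ℕ) : ℤ)) := by
    intro j
    simp only [hatSeq, deltaSeq, Perm.inv_def, Equiv.symm_apply_apply]
    push_cast
    ring
  have hnonneg : ∀ j : Fin n, (0 ≤ hatSeq μ ν w (w j)) ↔ w j ≤ h j := by
    intro j
    rw [hat_eq j, ← keyle j (w j)]
    constructor <;> intro <;> omega
  have hzero : ∀ j : Fin n, (hatSeq μ ν w (w j) = 0) ↔ (w j = h j ∧ E j) := by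
    intro j
    rw [hat_eq j, hE, ← keyzero j (w j)]
    constructor <;> intro <;> omega
  by_cases hA : ∀ i, w i ≤ h i
  case neg =>
    push_neg at hA
    obtain ⟨j, hj⟩ := hA
    -- LHS = 0
    have hL0 : kostkaZ (hookShape N k) (extendSeq (hatSeq μ ν w)) = 0 := by
      rw [kostkaZ, if_neg]
      push_neg
      refine ⟨((w j) : ℕ), ?_⟩
      have heq : extendSeq (hatSeq μ ν w) ((w j) : ℕ) = hatSeq μ ν w (w j) := by
        rw [extendSeq, dif_pos (w j).isLt]
      rw [heq]
      have := (hnonneg j).not.mpr (not_le.mpr hj)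
      omega
    rw [hL0]
    symm
    rw [Finset.card_eq_zero, Finset.filter_eq_empty_iff]
    intro J _
    rintro ⟨-, -, hJ3⟩
    have hthis := hJ3 j
    unfold hJfun at hthis
    split_ifs at hthis with hcond
    · rw [Fin.le_def] at hthis
      simp only [Fin.val_mk] at hthis
      rw [Fin.lt_def] at hj
      omega
    · exact absurd hthis (not_le.mpr hj)
  case pos =>
    -- all entries nonnegative
    have hposall : ∀ m, 0 ≤ extendSeq (hatSeq μ ν w) m := by
      intro m
      rw [extendSeq]
      split_ifs with hm
      · have : (⟨m, hm⟩ : Fin n) = w (w⁻¹ ⟨m, hm⟩) := by simp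
        rw [this]
        exact (hnonneg _).mpr (hA _)
      · exact le_rfl
    rw [kostkaZ, if_pos hposall]
    -- sum of contents is N
    have hsumZ : ∑ m ∈ Finset.range n, extendSeq (hatSeq μ ν w) m = (N : ℤ) := by
      rw [← Fin.sum_univ_eq_sum_range (fun m => extendSeq (hatSeq μ ν w) m) n]
      have hstep : ∀ i : Fin n, extendSeq (hatSeq μ ν w) (i : ℕ) = hatSeq μ ν w i := by
        intro i
        rw [extendSeq, dif_pos i.isLt]
      rw [Finset.sum_congr rfl (fun i _ => hstep i)]
      unfold hatSeq
      rw [Finset.sum_sub_distrib]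
      rw [Equiv.sum_comp w⁻¹ (fun i => ((ν i : ℤ) + deltaSeq n i))]
      rw [← Finset.sum_sub_distrib]
      have : ∀ i : Fin n, ((μ i : ℤ) + deltaSeq n i) - ((ν i : ℤ) + deltaSeq n i) =
          ((μ i - ν i : ℕ) : ℤ) := by
        intro i
        have := hlt i
        push_cast [Nat.cast_sub (le_of_lt this)]
        ring
      rw [Finset.sum_congr rfl (fun i _ => this i), ← Nat.cast_sum, ← hN]
    have hsum : cum (fun m => (extendSeq (hatSeq μ ν w) m).toNat) n = N := by
      have : ((cum (fun m => (extendSeq (hatSeq μ ν w) m).toNat) n : ℕ) : ℤ) = (N : ℤ) := by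
        rw [cum, Nat.cast_sum, Finset.sum_congr rfl
          (fun m _ => Int.toNat_of_nonneg (hposall m)), hsumZ]
      exact_mod_cast this
    have hczero : ∀ m, n ≤ m → (extendSeq (hatSeq μ ν w) m).toNat = 0 := by
      intro m hm
      rw [extendSeq, dif_neg (by omega)]
      rfl
    rw [kostka_hook _ n N k hczero hsum hk]
    -- now the RHS
    set Sgood : Finset (Fin n) :=
      Finset.univ.filter (fun i => (i : ℕ) < n - 1 ∧ ¬(w i = h i ∧ E i)) with hSgood
    have hRHS : (Finset.univ.filter (fun J : Finset (Fin n) =>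
        (∀ i ∈ J, (i : ℕ) < n - 1) ∧ J.card = k ∧
          ∀ i, w i ≤ hJfun μ ν h J i)) = Sgood.powersetCard k := by
      ext J
      simp only [Finset.mem_filter, Finset.mem_univ, true_and, Finset.mem_powersetCard]
      constructor
      · rintro ⟨hJ1, hJ2, hJ3⟩
        refine ⟨?_, hJ2⟩
        intro i hi
        rw [hSgood, Finset.mem_filter]
        refine ⟨Finset.mem_univ i, hJ1 i hi, ?_⟩
        rintro ⟨hwi, hEi⟩
        have h3 := hJ3 i
        unfold hJfun at h3
        rw [if_pos ⟨hi, hEi⟩] at h3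
        rw [Fin.le_def] at h3
        simp only [Fin.val_mk] at h3
        have := hEh i hEi
        rw [← hwi] at this
        omega
      · rintro ⟨hJsub, hJ2⟩
        have hJ1 : ∀ i ∈ J, (i : ℕ) < n - 1 := by
          intro i hi
          have := hJsub hi
          rw [hSgood, Finset.mem_filter] at this
          exact this.2.1
        refine ⟨hJ1, hJ2, ?_⟩
        intro i
        unfold hJfun
        split_ifs with hcond
        · obtain ⟨hiJ, hEi⟩ := hcond
          have hmem := hJsub hiJ
          rw [hSgood, Finset.mem_filter] at hmem
          have hne : w i ≠ h i := fun hwi => hmem.2.2 ⟨hwi, hEi⟩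
          have hle : w i ≤ h i := hA i
          rw [Fin.le_def] at hle ⊢
          simp only [Fin.val_mk]
          have : (w i : ℕ) ≠ ((h i) : ℕ) := fun hv => hne (Fin.ext hv)
          omega
        · exact hA i
    rw [hRHS, Finset.card_powersetCard]
    congr 1
    -- count: r - 1 = Sgood.card
    set B : Finset (Fin n) := Finset.univ.filter (fun i => w i = h i ∧ E i) with hB
    have hBlt : ∀ i ∈ B, (i : ℕ) < n - 1 := by
      intro i hi
      rw [hB, Finset.mem_filter] at hi
      obtain ⟨-, hwi, hEi⟩ := hi
      by_contra hge
      have hival : (i : ℕ) = n - 1 := by have := i.isLt; omega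
      have hhle : ((h i) : ℕ) ≤ (i : ℕ) := by have := (h i).isLt; omega
      have hmu : μ i ≤ μ (h i) := hμ (by rw [Fin.le_def]; omega)
      have := hlt i
      rw [hE] at hEi
      omega
    -- |Z| = |B|
    set Z : Finset (Fin n) := Finset.univ.filter (fun i => hatSeq μ ν w i = 0) with hZ
    have hZB : Z.card = B.card := by
      symm
      apply Finset.card_nbij (fun i => w i)
      · intro i hi
        rw [Finset.mem_coe, hB, Finset.mem_filter] at hi
        rw [Finset.mem_coe, hZ, Finset.mem_filter]
        exact ⟨Finset.mem_univ _, (hzero i).mpr hi.2⟩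
      · intro a _ b _ hab
        exact w.injective hab
      · intro z hz
        rw [hZ, Finset.mem_coe, Finset.mem_filter] at hz
        refine ⟨w⁻¹ z, ?_, by simp⟩
        rw [Finset.mem_coe, hB, Finset.mem_filter]
        refine ⟨Finset.mem_univ _, (hzero (w⁻¹ z)).mp ?_⟩
        rw [show w (w⁻¹ z) = z from w.apply_symm_apply z]
        exact hz.2
    -- r = n - |Z|
    have hr : ((Finset.range n).filter
        (fun m => (extendSeq (hatSeq μ ν w) m).toNat ≠ 0)).card = n - Z.card := by
      have hcompl : (Finset.univ.filter (fun i : Fin n => hatSeq μ ν w i ≠ 0)).card +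
          Z.card = n := by
        have hfc := Finset.card_filter_add_card_filter_not
          (s := (Finset.univ : Finset (Fin n))) (fun i => hatSeq μ ν w i ≠ 0)
        simp only [not_not] at hfc
        rw [hZ]
        simpa using hfc
      have hbij : ((Finset.range n).filter
          (fun m => (extendSeq (hatSeq μ ν w) m).toNat ≠ 0)).card =
          (Finset.univ.filter (fun i : Fin n => hatSeq μ ν w i ≠ 0)).card := by
        apply Finset.card_nbij (fun m => if hm : m < n then (⟨m, hm⟩ : Fin n) else ⟨0, hn⟩)
        · intro m hm
          rw [Finset.mem_coe, Finset.mem_filter, Finset.mem_range] at hm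
          dsimp only
          rw [dif_pos hm.1, Finset.mem_coe, Finset.mem_filter]
          refine ⟨Finset.mem_univ _, ?_⟩
          intro h0
          apply hm.2
          rw [extendSeq, dif_pos hm.1, h0]
          rfl
        · intro a ha b hb hab
          rw [Finset.mem_coe, Finset.mem_filter, Finset.mem_range] at ha hb
          simp only at hab
          rw [dif_pos ha.1, dif_pos hb.1] at hab
          exact congrArg Fin.val hab
        · intro i hi
          rw [Finset.mem_coe, Finset.mem_filter] at hi
          refine ⟨(i : ℕ), ?_, ?_⟩
          · rw [Finset.mem_coe, Finset.mem_filter, Finset.mem_range]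
            refine ⟨i.isLt, ?_⟩
            intro h0
            apply hi.2
            rw [extendSeq, dif_pos i.isLt] at h0
            have hnn := hposall (i : ℕ)
            rw [extendSeq, dif_pos i.isLt] at hnn
            have : hatSeq μ ν w ⟨(i:ℕ), i.isLt⟩ = 0 := by omega
            simpa using this
          · simp only
            rw [dif_pos i.isLt]
      omega
    rw [hr]
    -- Sgood.card = (n-1) - B.card
    have hSgval : Sgood.card = (n - 1) - B.card := by
      have hsplit : Sgood = (Finset.univ.filter (fun i : Fin n => (i : ℕ) < n - 1)) \ B := by
        rw [hSgood, hB]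
        ext i
        simp only [Finset.mem_filter, Finset.mem_univ, true_and, Finset.mem_sdiff]
      rw [hsplit, Finset.card_sdiff_of_subset]
      · congr 1
        have hneg : (Finset.univ.filter (fun i : Fin n => ¬((i:ℕ) < n - 1))) =
            {(⟨n-1, by omega⟩ : Fin n)} := by
          ext i
          simp only [Finset.mem_filter, Finset.mem_univ, true_and, Finset.mem_singleton,
            not_lt]
          constructor
          · intro hge
            apply Fin.ext
            show (i : ℕ) = n - 1
            have := i.isLt
            omega
          · intro hi
            rw [hi]
        have hfc := Finset.card_filter_add_card_filter_not
          (s := (Finset.univ : Finset (Fin n))) (fun i : Fin n => (i:ℕ) < n - 1)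
        rw [hneg] at hfc
        simp only [Finset.card_singleton, Finset.card_univ, Fintype.card_fin] at hfc
        omega
      · intro i hi
        rw [Finset.mem_filter]
        exact ⟨Finset.mem_univ _, hBlt i hi⟩
    omega
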